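/- Let G be an abelian group with an element g0 of order at least 3. If φ is a permutation of G fixing the identity and satisfying φ(gh) ∈ {φ(g)h, φ(g)h^{-1}} for all g, h ∈ G, then φ is either the identity or the inversion map g ↦ g^{-1}. -/
import Mathlib

private lemma xi_key {G : Type*} [CommGroup G]
    (φ : Equiv.Perm G) (hφ1 : φ 1 = 1)
    (hφ : ∀ g h : G, φ (g * h) = φ g * h ∨ φ (g * h) = φ g * h⁻¹)
    (x y : G) (hx : φ x = x) (hx2 : x * x ≠ 1)
    (hy : φ y = y⁻¹) (hy2 : y * y ≠ 1) : False := by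
  have hyy : φ (y * y) = y⁻¹ * y⁻¹ := by
    rcases hφ y y with h | h
    · rw [hy, inv_mul_cancel, ← hφ1] at h
      exact absurd (φ.injective h) hy2
    · rw [hy] at h; exact h
  have hxx : φ (x * x) = x * x := by
    rcases hφ x x with h | h
    · rw [hx] at h; exact h
    · rw [hx, mul_inv_cancel, ← hφ1] at h
      exact absurd (φ.injective h) hx2
  have hy3 : φ (y * y * y) = y⁻¹ * y⁻¹ * y⁻¹ := by
    rcases hφ (y * y) y with h | h
    · rw [hyy] at h
      exfalso
      rcases hφ y (y * y) with h' | h'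
      · rw [hy, ← mul_assoc] at h'
        have e := h.symm.trans h'
        rw [← mul_assoc] at e
        have e2 : y⁻¹ * y⁻¹ = y⁻¹ * y := mul_right_cancel e
        have e3 : y⁻¹ = y := mul_left_cancel e2
        exact hy2 (mul_eq_one_iff_eq_inv.mpr e3.symm)
      · rw [hy, ← mul_assoc] at h'
        have e := h.symm.trans h'
        -- y⁻¹*y⁻¹*y = y⁻¹*(y*y)⁻¹
        rw [mul_inv, mul_assoc] at e
        have e2 := mul_left_cancel e
        have e3 : y = y⁻¹ := mul_left_cancel e2
        exact hy2 (mul_eq_one_iff_eq_inv.mpr e3)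
    · rw [hyy] at h; exact h
  -- analyze φ (x*y)
  rcases hφ x y with h1 | h1
  · rw [hx] at h1
    rcases hφ y x with h2 | h2
    · rw [hy, mul_comm y x] at h2
      have e := h1.symm.trans h2
      -- x*y = y⁻¹*x
      rw [mul_comm x y] at e
      have e2 : y = y⁻¹ := mul_right_cancel e
      exact hy2 (mul_eq_one_iff_eq_inv.mpr e2)
    · rw [hy, mul_comm y x] at h2
      have e := h1.symm.trans h2
      -- x*y = y⁻¹*x⁻¹
      have k : (x * y) * (x * y) = 1 := by
        nth_rewrite 2 [e]
        rw [mul_assoc, mul_inv_cancel_left, mul_inv_cancel]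
      have k2 : (x * x) * (y * y) = 1 := (mul_mul_mul_comm x x y y).trans k
      have hx2y2 : x * x = y⁻¹ * y⁻¹ := by
        rw [← mul_inv]
        exact eq_inv_of_mul_eq_one_left k2
      have hinj : x * x = y * y := φ.injective (by rw [hxx, hyy, hx2y2])
      have hy4 : y * y = y⁻¹ * y⁻¹ := hinj.symm.trans hx2y2
      rcases hφ x (x * y) with h3 | h3
      · rw [hx, ← mul_assoc, hinj] at h3
        -- h3 : φ (y*y*y) = y*y*y
        have e2 := hy3.symm.trans h3
        rw [hy4] at e2
        -- y⁻¹*y⁻¹*y⁻¹ = y⁻¹*y⁻¹*y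
        have e3 : y⁻¹ = y := mul_left_cancel e2
        exact hy2 (mul_eq_one_iff_eq_inv.mpr e3.symm)
      · rw [hx, mul_inv, mul_inv_cancel_left] at h3
        have h3' : φ (y * y * y) = y⁻¹ := by
          rw [← h3]; congr 1; rw [← mul_assoc, hinj]
        have e2 := hy3.symm.trans h3'
        -- y⁻¹*y⁻¹*y⁻¹ = y⁻¹
        have e2' : y⁻¹ * y⁻¹ * y⁻¹ = 1 * y⁻¹ := by rw [one_mul]; exact e2
        have e3 : y⁻¹ * y⁻¹ = 1 := mul_right_cancel e2'
        apply hy2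
        have := congrArg (·⁻¹) e3
        simpa using this
  · rw [hx] at h1
    rcases hφ 1 (x * y) with h2 | h2
    · rw [hφ1, one_mul] at h2
      have e := h1.symm.trans h2
      -- x*y⁻¹ = x*y
      have e2 : y⁻¹ = y := mul_left_cancel e
      exact hy2 (mul_eq_one_iff_eq_inv.mpr e2.symm)
    · rw [hφ1] at h2
      simp only [one_mul, mul_inv] at h2
      have e := h1.symm.trans h2
      -- x*y⁻¹ = x⁻¹*y⁻¹
      have e2 : x = x⁻¹ := mul_right_cancel e
      exact hx2 (mul_eq_one_iff_eq_inv.mpr e2)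

/-- If `G` is abelian with an element of order at least 3, any colour-preserving
permutation of the complete Cayley graph fixing `1` is the identity or inversion. -/
theorem xi_of_abelian {G : Type*} [CommGroup G] (g0 : G)
    (hg0 : g0 ≠ 1) (hg0' : g0 ^ 2 ≠ 1)
    (φ : Equiv.Perm G) (hφ1 : φ 1 = 1)
    (hφ : ∀ g h : G, φ (g * h) = φ g * h ∨ φ (g * h) = φ g * h⁻¹) :
    (∀ g : G, φ g = g) ∨ (∀ g : G, φ g = g⁻¹) := by
  have L0 : ∀ g : G, φ g = g ∨ φ g = g⁻¹ := fun g => by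
    simpa [hφ1] using hφ 1 g
  have hg2 : g0 * g0 ≠ 1 := by rw [← sq]; exact hg0'
  rcases L0 g0 with h0 | h0
  · left
    intro g
    rcases L0 g with h | h
    · exact h
    · by_cases hg : g * g = 1
      · exact h.trans (inv_eq_of_mul_eq_one_right hg)
      · exact (xi_key φ hφ1 hφ g0 g h0 hg2 h hg).elim
  · right
    intro g
    rcases L0 g with h | h
    · by_cases hg : g * g = 1
      · exact h.trans (inv_eq_of_mul_eq_one_right hg).symm
      · exact (xi_key φ hφ1 hφ g g0 h hg h0 hg2).elim
    · exact h
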